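/- arXiv:math/9904094 — 5 statements merged into one kernel-verified Lean document; each statement's English description precedes it below -/
import Mathlib

section
/- If P is a hereditary cone in a C*-algebra A, N = {a ∈ A : a*a ∈ P}, and M = span(P), then M equals the linear span of the set of products {a*b : a, b ∈ N} (no closure taken). -/
/-- If `P` is a hereditary cone in a C*-algebra `A`, `N = {a : A | star a * a ∈ P}` and
`M = span ℂ P`, then `M` coincides with the linear span of the set of products
`{star a * b : a, b ∈ N}` (no closure taken). -/
theorem span_hereditary_cone_eq_span_products
    {A : Type*} [NonUnitalNormedRing A] [StarRing A] [CStarRing A]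
    [PartialOrder A] [StarOrderedRing A] [NormedSpace ℂ A] [StarModule ℂ A]
    [IsScalarTower ℂ A A] [SMulCommClass ℂ A A] [CompleteSpace A]
    (P : Set A)
    (hPpos : ∀ p ∈ P, (0 : A) ≤ p)
    (hPadd : ∀ p ∈ P, ∀ q ∈ P, p + q ∈ P)
    (hPsmul : ∀ (r : ℝ), 0 ≤ r → ∀ p ∈ P, r • p ∈ P)
    (hPher : ∀ a b : A, 0 ≤ a → a ≤ b → b ∈ P → a ∈ P) :
    Submodule.span ℂ P =
      Submodule.span ℂ {x : A | ∃ a ∈ {a : A | star a * a ∈ P},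
        ∃ b ∈ {a : A | star a * a ∈ P}, x = star a * b} := by
  letI : NonUnitalCStarAlgebra A :=
    { ‹NonUnitalNormedRing A›, ‹StarRing A›, ‹CStarRing A›, ‹CompleteSpace A›,
      ‹NormedSpace ℂ A›, ‹IsScalarTower ℂ A A›, ‹SMulCommClass ℂ A A›, ‹StarModule ℂ A› with }
  apply le_antisymm
  · rw [Submodule.span_le]
    intro p hp
    have hp0 : (0 : A) ≤ p := hPpos p hp
    have hs : star (CFC.sqrt p) * CFC.sqrt p = p := by
      rw [(IsSelfAdjoint.of_nonneg (CFC.sqrt_nonneg p)).star_eq,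
        CFC.sqrt_mul_sqrt_self p hp0]
    have hN : CFC.sqrt p ∈ {a : A | star a * a ∈ P} := by
      simpa [Set.mem_setOf_eq, hs] using hp
    exact Submodule.subset_span ⟨CFC.sqrt p, hN, CFC.sqrt p, hN, hs.symm⟩
  · rw [Submodule.span_le]
    rintro x ⟨a, ha, b, hb, rfl⟩
    simp only [Set.mem_setOf_eq] at ha hb
    -- key : for any unit scalar μ, star (b + μ • a) * (b + μ • a) ∈ P
    have key : ∀ μ : ℂ, star (b + μ • a) * (b + μ • a) ∈ P := by
      intro μ
      apply hPher _ (star (b + μ • a) * (b + μ • a) + star (b - μ • a) * (b - μ • a))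
        (star_mul_self_nonneg _)
        (le_add_of_nonneg_right (star_mul_self_nonneg _))
      have hid : star (b + μ • a) * (b + μ • a) + star (b - μ • a) * (b - μ • a)
          = (2 : ℂ) • (star b * b) + ((2 : ℂ) * (μ * star μ)) • (star a * a) := by
        simp only [star_add, star_sub, star_smul, add_mul, sub_mul, mul_add, mul_sub,
          smul_mul_assoc, mul_smul_comm, smul_smul]
        module
      have h2 : ((2 : ℂ)) • (star b * b) = (2 : ℝ) • (star b * b) := by
        rw [← Complex.coe_smul]; norm_num
      have h3 : ((2 : ℂ) * (μ * star μ)) • (star a * a)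
          = ((2 * Complex.normSq μ : ℝ)) • (star a * a) := by
        rw [← Complex.coe_smul]
        congr 1
        push_cast
        rw [Complex.star_def, Complex.mul_conj]
      rw [hid, h2, h3]
      exact hPadd _ (hPsmul 2 (by norm_num) _ hb)
        _ (hPsmul _ (mul_nonneg (by norm_num) (Complex.normSq_nonneg μ)) _ ha)
    -- polarization identity
    have hpol : star a * b
        = (1 / 4 : ℂ) • (star (b + a) * (b + a))
          + (Complex.I / 4) • (star (b + Complex.I • a) * (b + Complex.I • a))
          + (-(1 / 4) : ℂ) • (star (b + (-1 : ℂ) • a) * (b + (-1 : ℂ) • a))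
          + (-(Complex.I / 4)) • (star (b + (-Complex.I) • a) * (b + (-Complex.I) • a)) := by
      simp only [star_add, star_smul, add_mul, mul_add, smul_mul_assoc, mul_smul_comm,
        smul_smul, smul_add, star_neg, Complex.star_def, Complex.conj_I, map_one, map_neg]
      match_scalars <;> simp [Complex.ext_iff] <;> norm_num
    have ha' : star a * b ∈ Submodule.span ℂ P := by
      rw [hpol]
      have hb1 : b + a = b + (1:ℂ) • a := by simp
      refine Submodule.add_mem _ (Submodule.add_mem _ (Submodule.add_mem _ ?_ ?_) ?_) ?_ <;>
        exact Submodule.smul_mem _ _ (Submodule.subset_span (by first | exact key _ |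
          (rw [hb1]; exact key 1)))
    exact ha'
end

section
/- Let A be a C*-algebra of operators on a Hilbert space H, G a locally compact group with Haar measure, and f : G → A a continuous compactly supported function. Then (∫ f(t) dt)* (∫ f(t) dt) ≤ |supp(f)| · ∫ f(t)* f(t) dt, where |supp(f)| denotes the Haar measure of the support of f. -/
open MeasureTheory ContinuousLinearMap

open scoped RealInnerProductSpace

lemma sq_norm_integral_le {G H : Type*} [NormedAddCommGroup H] [NormedSpace ℝ H]
    [TopologicalSpace G] [MeasurableSpace G] [BorelSpace G]
    (μ : Measure G) [IsFiniteMeasureOnCompacts μ]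
    (g : G → H) (hc : Continuous g) (hs : HasCompactSupport g)
    {S : Set G} (hSm : MeasurableSet S) (hμS : μ S ≠ ⊤) (hsub : tsupport g ⊆ S) :
    ‖∫ t, g t ∂μ‖ ^ 2 ≤ (μ S).toReal * ∫ t, ‖g t‖ ^ 2 ∂μ := by
  set h : G → ℝ := fun t => ‖g t‖ with hh
  have hhc : Continuous h := hc.norm
  have hhs : HasCompactSupport h := hs.norm
  have hmem : MemLp h 2 μ := hhc.memLp_of_hasCompactSupport hhs
  set a : Lp ℝ 2 μ := hmem.toLp h with ha
  set b : Lp ℝ 2 μ := indicatorConstLp 2 hSm hμS (1 : ℝ) with hb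
  have hcs := real_inner_mul_inner_self_le b a
  have hba : (inner ℝ b a : ℝ) = ∫ t, h t ∂μ := by
    rw [L2.inner_indicatorConstLp_one hSm hμS a]
    have : ∫ t in S, a t ∂μ = ∫ t in S, h t ∂μ :=
      integral_congr_ae ((hmem.coeFn_toLp).restrict)
    rw [this]
    exact setIntegral_eq_integral_of_forall_compl_eq_zero fun x hx => by
      simp [hh, image_eq_zero_of_notMem_tsupport (fun hmem' => hx (hsub hmem'))]
  have hbb : (inner ℝ b b : ℝ) = (μ S).toReal := by
    rw [L2.inner_indicatorConstLp_one hSm hμS b]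
    have : ∫ t in S, b t ∂μ = ∫ t in S, (1 : ℝ) ∂μ := by
      refine setIntegral_congr_ae hSm ?_
      filter_upwards [indicatorConstLp_coeFn_mem (μ := μ) (p := 2) (hs := hSm) (hμs := hμS) (c := (1:ℝ))] with x hx hxS
      exact hx hxS
    rw [this, setIntegral_const, smul_eq_mul, mul_one]; rfl
  have haa : (inner ℝ a a : ℝ) = ∫ t, ‖g t‖ ^ 2 ∂μ := by
    rw [L2.inner_def]
    refine integral_congr_ae ?_
    filter_upwards [hmem.coeFn_toLp] with x hx
    rw [ha, hx]; simp [hh, real_inner_self_eq_norm_sq, sq]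
  rw [hba, hbb, haa] at hcs
  calc ‖∫ t, g t ∂μ‖ ^ 2 ≤ (∫ t, ‖g t‖ ∂μ) ^ 2 := by
        have h1 := norm_integral_le_integral_norm (f := g) (μ := μ)
        exact pow_le_pow_left₀ (norm_nonneg _) h1 2
    _ ≤ (μ S).toReal * ∫ t, ‖g t‖ ^ 2 ∂μ := by
        rw [pow_two]; exact hcs

/-- For a continuous compactly supported function `f` from a locally compact group `G` with Haar
measure `μ` into the bounded operators on a Hilbert space `H`,
`(∫ f)* (∫ f) ≤ μ(supp f) • ∫ f* f` in the Loewner order on `B(H)`. -/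
theorem integral_star_mul_integral_le
    {H : Type*} [NormedAddCommGroup H] [InnerProductSpace ℂ H] [CompleteSpace H]
    {G : Type*} [Group G] [TopologicalSpace G] [IsTopologicalGroup G] [LocallyCompactSpace G]
    [MeasurableSpace G] [BorelSpace G]
    (μ : Measure G) [μ.IsHaarMeasure]
    (f : G → H →L[ℂ] H) (hf : Continuous f) (hsupp : HasCompactSupport f) :
    adjoint (∫ t, f t ∂μ) ∘L (∫ t, f t ∂μ) ≤
      (μ (tsupport f)).toReal • ∫ t, adjoint (f t) ∘L f t ∂μ := by
  set c : ℝ := (μ (tsupport f)).toReal with hc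
  set T : H →L[ℂ] H := ∫ t, f t ∂μ with hT
  set A : G → H →L[ℂ] H := fun t => adjoint (f t) ∘L f t with hA
  have hSm : MeasurableSet (tsupport f) := (isClosed_tsupport f).measurableSet
  have hμS : μ (tsupport f) ≠ ⊤ := hsupp.measure_lt_top.ne
  have hfint : Integrable f μ := hf.integrable_of_hasCompactSupport hsupp
  have hadj : Continuous fun t => adjoint (f t) :=
    (ContinuousLinearMap.adjoint (𝕜 := ℂ) (E := H) (F := H)).continuous.comp hf
  have hAc : Continuous A := hadj.mul hf
  have hAs : HasCompactSupport A :=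
    hsupp.comp_left (g := fun M : H →L[ℂ] H => adjoint M ∘L M) (by simp)
  have hAint : Integrable A μ := hAc.integrable_of_hasCompactSupport hAs
  rw [ContinuousLinearMap.le_def, ContinuousLinearMap.isPositive_iff_complex]
  intro x
  have hgx : ∀ t : G, A t x = adjoint (f t) (f t x) := fun t => rfl
  have hgc : Continuous fun t => f t x := (ContinuousLinearMap.apply ℂ H x).continuous.comp hf
  have hgs : HasCompactSupport fun t => f t x :=
    hsupp.comp_left (g := fun M : H →L[ℂ] H => M x) rfl
  have hgint : Integrable (fun t => f t x) μ := hgc.integrable_of_hasCompactSupport hgs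
  have hAxc : Continuous fun t => A t x := (ContinuousLinearMap.apply ℂ H x).continuous.comp hAc
  have hAxs : HasCompactSupport fun t => A t x :=
    hAs.comp_left (g := fun M : H →L[ℂ] H => M x) rfl
  have hAxint : Integrable (fun t => A t x) μ := hAxc.integrable_of_hasCompactSupport hAxs
  have hsub : tsupport (fun t => f t x) ⊆ tsupport f :=
    closure_mono (Function.support_subset_iff.2 fun t ht => fun h0 => ht (by simp [h0]))
  -- compute the inner product
  have hval : (inner ℂ x ((c • (∫ t, A t ∂μ) - adjoint T ∘L T) x) : ℂ) =
      ((c * ∫ t, ‖f t x‖ ^ 2 ∂μ - ‖T x‖ ^ 2 : ℝ) : ℂ) := by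
    have h1 : (∫ t, A t ∂μ) x = ∫ t, A t x ∂μ := integral_apply hAint x
    have h2 : (inner ℂ x (∫ t, A t x ∂μ) : ℂ) = ∫ t, (inner ℂ x (A t x) : ℂ) ∂μ :=
      (integral_inner hAxint x).symm
    have h3 : ∀ t, (inner ℂ x (A t x) : ℂ) = ((‖f t x‖ ^ 2 : ℝ) : ℂ) := by
      intro t
      rw [hgx t, ContinuousLinearMap.adjoint_inner_right, inner_self_eq_norm_sq_to_K]
      norm_cast
    have h4 : (inner ℂ x ((adjoint T ∘L T) x) : ℂ) = ((‖T x‖ ^ 2 : ℝ) : ℂ) := by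
      rw [ContinuousLinearMap.comp_apply, ContinuousLinearMap.adjoint_inner_right,
        inner_self_eq_norm_sq_to_K]
      norm_cast
    rw [ContinuousLinearMap.sub_apply, inner_sub_right, h4,
      ContinuousLinearMap.smul_apply, RCLike.real_smul_eq_coe_smul (K := ℂ),
      inner_smul_right, h1, h2]
    simp_rw [h3]
    have hio : ∫ t, ((‖f t x‖ ^ 2 : ℝ) : ℂ) ∂μ = ((∫ t, ‖f t x‖ ^ 2 ∂μ : ℝ) : ℂ) :=
      integral_ofReal
    rw [hio]
    rw [show (RCLike.ofReal c : ℂ) = Complex.ofReal c from rfl]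
    push_cast
    ring
  have hTx : T x = ∫ t, f t x ∂μ := integral_apply hfint x
  have hsc : ‖T x‖ ^ 2 ≤ c * ∫ t, ‖f t x‖ ^ 2 ∂μ := by
    rw [hTx, hc]
    exact sq_norm_integral_le μ _ hgc hgs hSm hμS hsub
  have hnn : (0 : ℝ) ≤ c * (∫ t, ‖f t x‖ ^ 2 ∂μ) - ‖T x‖ ^ 2 := by linarith
  have hconj : (inner ℂ ((c • (∫ t, A t ∂μ) - adjoint T ∘L T) x) x : ℂ) =
      ((c * ∫ t, ‖f t x‖ ^ 2 ∂μ - ‖T x‖ ^ 2 : ℝ) : ℂ) := by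
    rw [← inner_conj_symm, hval, Complex.conj_ofReal]
  constructor
  · rw [hconj]
    norm_cast
  · rw [hconj]
    norm_cast
end

section
/- Let φ ∈ L²(S¹) with ‖φ‖₂ = 1, let P(ξ) = ⟨ξ, φ⟩φ be the rank-one projection onto span(φ), let U be multiplication by z on L²(S¹), and set αₙ(P) = UⁿPU⁻ⁿ. If φ ∈ L∞(S¹), then for every compact operator T on L²(S¹), the net of finite partial sums Σ_{n∈J} αₙ(P) T (over finite subsets J ⊆ ℤ, ordered by inclusion) converges in norm to M_{|φ|²} T, where M_{|φ|²} is multiplication by |φ|². -/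
open MeasureTheory AddCircle ContinuousLinearMap Filter
open scoped ENNReal

section MulCLM

variable {α : Type*} [MeasurableSpace α] {μ : Measure α}

/-- Multiplication by an `L∞` function as a continuous linear map on `L²`. -/
lemma exists_mul_clm (ψ : α → ℂ) (hψ : MemLp ψ ∞ μ) :
    ∃ B : Lp ℂ 2 μ →L[ℂ] Lp ℂ 2 μ,
      ∀ ξ : Lp ℂ 2 μ, (B ξ : α → ℂ) =ᵐ[μ] fun x => ψ x * ξ x := by
  have hmem : ∀ ξ : Lp ℂ 2 μ, MemLp (ψ • (ξ : α → ℂ)) 2 μ := fun ξ =>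
    (Lp.memLp ξ).smul hψ
  refine ⟨LinearMap.mkContinuous
    { toFun := fun ξ => (hmem ξ).toLp _
      map_add' := fun ξ η => ?_
      map_smul' := fun c ξ => ?_ } (eLpNorm ψ ∞ μ).toReal (fun ξ => ?_), fun ξ => ?_⟩
  · rw [← MemLp.toLp_add]
    refine MemLp.toLp_congr _ _ ?_
    filter_upwards [Lp.coeFn_add ξ η] with x hx
    simp only [Pi.smul_apply', hx, Pi.add_apply, Pi.mul_apply, smul_eq_mul]
    ring
  · rw [← MemLp.toLp_const_smul]
    refine MemLp.toLp_congr (hmem _) ((hmem ξ).const_smul c) ?_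
    filter_upwards [Lp.coeFn_smul c ξ] with x hx
    simp only [Pi.smul_apply', hx, Pi.smul_apply, Pi.mul_apply, smul_eq_mul, RingHom.id_apply]
    ring
  · simp only [LinearMap.coe_mk, AddHom.coe_mk]
    rw [Lp.norm_toLp]
    have h1 : eLpNorm (ψ • (ξ : α → ℂ)) 2 μ ≤ eLpNorm ψ ∞ μ * eLpNorm (ξ : α → ℂ) 2 μ :=
      eLpNorm_smul_le_eLpNorm_top_mul_eLpNorm 2 (Lp.aestronglyMeasurable ξ) ψ
    have h2 := ENNReal.toReal_mono
      (by exact ENNReal.mul_ne_top hψ.2.ne (Lp.eLpNorm_ne_top ξ)) h1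
    rw [ENNReal.toReal_mul] at h2
    simpa [Lp.norm_def] using h2
  · filter_upwards [MemLp.coeFn_toLp (hmem ξ)] with x hx
    simpa using hx

end MulCLM

/-- If a net of operators is uniformly bounded and converges pointwise to `L`, then after
composing with a map sending the unit ball into a totally bounded set, it converges in norm. -/
lemma tendsto_comp_of_pointwise_of_totallyBounded
    {E F : Type*} [NormedAddCommGroup E] [NormedSpace ℂ E]
    [NormedAddCommGroup F] [NormedSpace ℂ F]
    {ι : Type*} [Nonempty ι] [SemilatticeSup ι]
    (S : ι → E →L[ℂ] F) (L : E →L[ℂ] F) (C : ℝ)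
    (hC : ∀ i, ‖S i‖ ≤ C)
    (hconv : ∀ x, Tendsto (fun i => S i x) atTop (nhds (L x)))
    (T : E →L[ℂ] E) (K : Set E) (hK : TotallyBounded K)
    (hTK : ∀ x : E, ‖x‖ ≤ 1 → T x ∈ K) :
    Tendsto (fun i => (S i) ∘L T) atTop (nhds (L ∘L T)) := by
  have hC0 : 0 ≤ C := le_trans (norm_nonneg _) (hC (Classical.arbitrary ι))
  rw [Metric.tendsto_atTop]
  intro ε hε
  set D : ℝ := C + ‖L‖ + 1 with hD
  have hD0 : 0 < D := by positivity
  set δ : ℝ := ε / 2 / D with hδdef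
  have hδ : 0 < δ := by positivity
  obtain ⟨t, htfin, htcov⟩ := Metric.totallyBounded_iff.mp hK δ hδ
  have hev : ∀ᶠ i in atTop, ∀ y ∈ t, ‖S i y - L y‖ < δ := by
    refine (eventually_all_finite htfin).2 fun y _ => ?_
    filter_upwards [Metric.tendsto_nhds.mp (hconv y) δ hδ] with i hi
    rwa [dist_eq_norm] at hi
  obtain ⟨N, hN⟩ := eventually_atTop.mp hev
  refine ⟨N, fun i hi => ?_⟩
  rw [dist_eq_norm]
  have key : ∀ x : E, ‖x‖ ≤ 1 → ‖S i (T x) - L (T x)‖ ≤ D * δ := by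
    intro x hx
    obtain ⟨y, hy, hxy⟩ := Set.mem_iUnion₂.mp (htcov (hTK x hx))
    have hdist : ‖T x - y‖ < δ := by rwa [Metric.mem_ball, dist_eq_norm] at hxy
    calc ‖S i (T x) - L (T x)‖
        = ‖(S i (T x) - S i y) + (S i y - L y) + (L y - L (T x))‖ := by congr 1; abel
      _ ≤ ‖S i (T x) - S i y‖ + ‖S i y - L y‖ + ‖L y - L (T x)‖ :=
          norm_add₃_le
      _ ≤ C * δ + δ + ‖L‖ * δ := by
          gcongr
          · calc ‖S i (T x) - S i y‖ = ‖S i (T x - y)‖ := by rw [map_sub]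
              _ ≤ ‖S i‖ * ‖T x - y‖ := le_opNorm _ _
              _ ≤ C * δ := by
                  apply mul_le_mul (hC i) hdist.le (norm_nonneg _) hC0
          · exact (hN i hi y hy).le
          · calc ‖L y - L (T x)‖ = ‖L (y - T x)‖ := by rw [map_sub]
              _ ≤ ‖L‖ * ‖y - T x‖ := le_opNorm _ _
              _ ≤ ‖L‖ * δ := by
                  rw [norm_sub_rev]
                  exact mul_le_mul_of_nonneg_left hdist.le (norm_nonneg _)
      _ = D * δ := by ring
  have hop : ‖S i ∘L T - L ∘L T‖ ≤ D * δ := by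
    refine opNorm_le_bound _ (by positivity) fun x => ?_
    rcases eq_or_ne x 0 with rfl | hx0
    · simp
    · have hxn : (0 : ℝ) < ‖x‖ := norm_pos_iff.mpr hx0
      set u : E := ‖x‖⁻¹ • x with hu
      have hun : ‖u‖ ≤ 1 := by
        rw [hu, norm_smul, norm_inv, norm_norm, inv_mul_cancel₀ hxn.ne']
      have hxu : x = ‖x‖ • u := by
        rw [hu, smul_smul, mul_inv_cancel₀ hxn.ne', one_smul]
      have := key u hun
      calc ‖(S i ∘L T - L ∘L T) x‖ = ‖S i (T x) - L (T x)‖ := by simp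
        _ = ‖x‖ * ‖S i (T u) - L (T u)‖ := by
            conv_lhs => rw [hxu]
            rw [T.map_smul_of_tower, (S i).map_smul_of_tower, L.map_smul_of_tower,
              ← smul_sub, norm_smul, norm_norm]
        _ ≤ ‖x‖ * (D * δ) := mul_le_mul_of_nonneg_left this hxn.le
        _ = D * δ * ‖x‖ := by ring
  refine lt_of_le_of_lt hop ?_
  have : D * δ = ε / 2 := by
    rw [hδdef]
    field_simp
  rw [this]
  linarith

/-- Let `φ` be a unit vector of `L²(S¹)` which lies in `L∞(S¹)`, `P` the rank-one projection
onto the span of `φ`, and `W n` the operator of multiplication by `zⁿ` (so `W n = Uⁿ` with `U`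
the bilateral shift, and `αₙ(P) = W n ∘ P ∘ W (-n)`).  Then for every compact operator `T`, the
net of finite partial sums `∑_{n ∈ J} αₙ(P) T` over finite subsets `J ⊆ ℤ` converges in norm to
`M T`, where `M` is multiplication by `|φ|²`. -/
theorem tendsto_sum_conj_rank_one_comp_compact
    {p : ℝ} [hp : Fact (0 < p)]
    (φ : Lp ℂ 2 (@haarAddCircle p hp)) (hφ2 : ‖φ‖ = 1)
    (hφtop : MemLp (φ : AddCircle p → ℂ) ∞ haarAddCircle)
    (P : Lp ℂ 2 (@haarAddCircle p hp) →L[ℂ] Lp ℂ 2 (@haarAddCircle p hp))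
    (hP : ∀ ξ, P ξ = (inner ℂ φ ξ : ℂ) • φ)
    (W : ℤ → (Lp ℂ 2 (@haarAddCircle p hp) →L[ℂ] Lp ℂ 2 (@haarAddCircle p hp)))
    (hW : ∀ (n : ℤ) (ξ : Lp ℂ 2 (@haarAddCircle p hp)),
      (W n ξ : AddCircle p → ℂ) =ᵐ[haarAddCircle] fun x => fourier n x * ξ x)
    (M : Lp ℂ 2 (@haarAddCircle p hp) →L[ℂ] Lp ℂ 2 (@haarAddCircle p hp))
    (hM : ∀ ξ, (M ξ : AddCircle p → ℂ) =ᵐ[haarAddCircle]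
      fun x => (starRingEnd ℂ) (φ x) * φ x * ξ x)
    (T : Lp ℂ 2 (@haarAddCircle p hp) →L[ℂ] Lp ℂ 2 (@haarAddCircle p hp))
    (hT : IsCompactOperator T) :
    Tendsto (fun J : Finset ℤ => ∑ n ∈ J, (W n ∘L P ∘L W (-n)) ∘L T)
      atTop (nhds (M ∘L T)) := by
  classical
  -- `conj φ` lies in `L∞`
  have hφstar : MemLp (fun x => (starRingEnd ℂ) (φ x)) ∞ haarAddCircle := by
    refine hφtop.congr_norm ?_ ?_
    · exact RCLike.continuous_conj.comp_aestronglyMeasurable (Lp.aestronglyMeasurable φ)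
    · filter_upwards with x
      simp
  obtain ⟨B, hB⟩ := exists_mul_clm (fun x => φ x) hφtop
  obtain ⟨A, hA⟩ := exists_mul_clm (fun x => (starRingEnd ℂ) (φ x)) hφstar
  -- `M = B ∘ A`
  have hMB : ∀ ξ, M ξ = B (A ξ) := by
    intro ξ
    apply Lp.ext
    filter_upwards [hM ξ, hB (A ξ), hA ξ] with x h1 h2 h3
    rw [h1, h2, h3]
    ring
  -- `W n φ = B (fourierLp 2 n)`
  have hWφ : ∀ n : ℤ, W n φ = B (fourierLp 2 n) := by
    intro n
    apply Lp.ext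
    filter_upwards [hW n φ, hB (fourierLp 2 n), coeFn_fourierLp 2 n] with x h1 h2 h3
    rw [h1, h2, h3]
    ring
  -- the inner products are Fourier coefficients of `A ξ`
  have hinner : ∀ (n : ℤ) (ξ : Lp ℂ 2 (@haarAddCircle p hp)),
      (inner ℂ φ (W (-n) ξ) : ℂ) = fourierCoeff (↑(A ξ) : AddCircle p → ℂ) n := by
    intro n ξ
    rw [MeasureTheory.L2.inner_def, fourierCoeff]
    apply integral_congr_ae
    filter_upwards [hW (-n) ξ, hA ξ] with x h1 h2
    rw [h1, h2]
    simp only [RCLike.inner_apply, smul_eq_mul]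
    ring
  -- the individual terms of the net
  have hterm : ∀ (n : ℤ) (ξ : Lp ℂ 2 (@haarAddCircle p hp)),
      (W n ∘L P ∘L W (-n)) ξ = fourierCoeff (↑(A ξ) : AddCircle p → ℂ) n • B (fourierLp 2 n) := by
    intro n ξ
    simp only [ContinuousLinearMap.comp_apply]
    rw [hP, ContinuousLinearMap.map_smul, hinner, hWφ]
  -- strong (pointwise) convergence
  have hstrong : ∀ ξ : Lp ℂ 2 (@haarAddCircle p hp),
      HasSum (fun n : ℤ => (W n ∘L P ∘L W (-n)) ξ) (M ξ) := by
    intro ξ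
    have h1 := hasSum_fourier_series_L2 (A ξ)
    have h2 := h1.mapL B
    simp only [ContinuousLinearMap.map_smul] at h2
    have hfun : (fun n : ℤ => (W n ∘L P ∘L W (-n)) ξ)
        = fun n : ℤ => fourierCoeff (↑(A ξ) : AddCircle p → ℂ) n • B (fourierLp 2 n) :=
      funext fun n => hterm n ξ
    rw [hfun, hMB]
    exact h2
  -- uniform bound on the partial sums
  have hbound : ∀ J : Finset ℤ, ‖∑ n ∈ J, (W n ∘L P ∘L W (-n))‖ ≤ ‖B‖ * ‖A‖ := by
    intro J
    refine opNorm_le_bound _ (by positivity) fun ξ => ?_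
    have hrep : (∑ n ∈ J, (W n ∘L P ∘L W (-n))) ξ
        = B (∑ n ∈ J, fourierCoeff (↑(A ξ) : AddCircle p → ℂ) n • fourierLp 2 n) := by
      rw [ContinuousLinearMap.sum_apply, map_sum]
      exact Finset.sum_congr rfl fun n _ => by rw [hterm, ContinuousLinearMap.map_smul]
    rw [hrep]
    have hc : ∀ n : ℤ, fourierCoeff (↑(A ξ) : AddCircle p → ℂ) n
        = (inner ℂ (fourierLp 2 n) (A ξ) : ℂ) := by
      intro n
      rw [← fourierBasis_repr, fourierBasis.repr_apply_apply, coe_fourierBasis]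
    have h2 : ‖∑ n ∈ J, fourierCoeff (↑(A ξ) : AddCircle p → ℂ) n
        • (fourierLp 2 n : Lp ℂ 2 (@haarAddCircle p hp))‖ ≤ ‖A ξ‖ := by
      have horth := @orthonormal_fourier p hp
      set c : ℤ → ℂ := fun n => fourierCoeff (↑(A ξ) : AddCircle p → ℂ) n with hcdef
      have hsq : ‖∑ n ∈ J, c n • (fourierLp 2 n : Lp ℂ 2 (@haarAddCircle p hp))‖ ^ 2 = ∑ n ∈ J, ‖c n‖ ^ 2 := by
        have hin := horth.inner_sum c c J
        have := inner_self_eq_norm_sq (𝕜 := ℂ) (∑ n ∈ J, c n • (fourierLp 2 n : Lp ℂ 2 (@haarAddCircle p hp)))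
        rw [hin] at this
        rw [← this, map_sum]
        refine Finset.sum_congr rfl fun n _ => ?_
        rw [RCLike.conj_mul]
        norm_cast
      have hb : ∑ n ∈ J, ‖c n‖ ^ 2 ≤ ‖A ξ‖ ^ 2 := by
        have := horth.sum_inner_products_le (A ξ) (s := J)
        simp_rw [← hc] at this
        exact this
      have : ‖∑ n ∈ J, c n • (fourierLp 2 n : Lp ℂ 2 (@haarAddCircle p hp))‖ ^ 2 ≤ ‖A ξ‖ ^ 2 := by rw [hsq]; exact hb
      exact (pow_le_pow_iff_left₀ (norm_nonneg _) (norm_nonneg _) (by norm_num)).mp this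
    calc ‖B (∑ n ∈ J, fourierCoeff (↑(A ξ) : AddCircle p → ℂ) n • fourierLp 2 n)‖
        ≤ ‖B‖ * ‖∑ n ∈ J, fourierCoeff (↑(A ξ) : AddCircle p → ℂ) n • fourierLp 2 n‖ :=
          le_opNorm _ _
      _ ≤ ‖B‖ * ‖A ξ‖ := mul_le_mul_of_nonneg_left h2 (norm_nonneg _)
      _ ≤ ‖B‖ * (‖A‖ * ‖ξ‖) :=
          mul_le_mul_of_nonneg_left (le_opNorm _ _) (norm_nonneg _)
      _ = ‖B‖ * ‖A‖ * ‖ξ‖ := by ring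
  -- totally bounded image of the unit ball under `T`
  obtain ⟨K, hKc, hKsub⟩ :=
    IsCompactOperator.image_closedBall_subset_compact (𝕜₁ := ℂ)
      (f := (T : Lp ℂ 2 (@haarAddCircle p hp) →ₗ[ℂ] Lp ℂ 2 (@haarAddCircle p hp))) hT 1
  have hmain := tendsto_comp_of_pointwise_of_totallyBounded
    (fun J : Finset ℤ => ∑ n ∈ J, (W n ∘L P ∘L W (-n))) M (‖B‖ * ‖A‖) hbound
    (fun ξ => by
      have := hstrong ξ
      simpa only [ContinuousLinearMap.sum_apply] using
        (show Tendsto (fun s : Finset ℤ => ∑ b ∈ s, (W b ∘L P ∘L W (-b)) ξ) atTop (nhds (M ξ)) from this)) T K hKc.totallyBounded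
    (fun x hx => hKsub ⟨x, by simpa [Metric.mem_closedBall, dist_eq_norm] using hx, rfl⟩)
  simpa only [ContinuousLinearMap.finset_sum_comp] using hmain
end

section
/- Let f : G → A be an unconditionally integrable function from a locally compact group into a C*-algebra, and let {φ_i} ⊆ L∞(G) be a bounded net converging to φ ∈ L∞(G) uniformly on compact subsets of G. Then ∫ᵘ φ_i(t) f(t) dt → ∫ᵘ φ(t) f(t) dt in the norm of A. -/
open MeasureTheory Filter

/-- Let `f : G → A` be an unconditionally integrable function from a locally compact group into
a C*-algebra (so each bounded measurable `φ` has an unconditional integral `I φ = ∫ᵘ φ f`,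
realized as the limit of the net of Bochner integrals over compact sets, with a uniform bound
`‖I φ‖ ≤ M ‖φ‖_∞` and uniformly small tails outside compact sets).  If `{φᵢ}` is a bounded net
in `L∞(G)` converging to `φ` uniformly on compact subsets of `G`, then `I (φᵢ) → I φ` in the
norm of `A`. -/
theorem tendsto_unconditional_integral_of_tendstoUniformlyOn
    {G : Type*} [Group G] [TopologicalSpace G] [IsTopologicalGroup G] [LocallyCompactSpace G]
    [MeasurableSpace G] [BorelSpace G]
    (μ : Measure G) [μ.IsHaarMeasure]
    {A : Type*} [NonUnitalNormedRing A] [StarRing A] [CStarRing A]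
    [NormedSpace ℂ A] [IsScalarTower ℂ A A] [SMulCommClass ℂ A A] [CompleteSpace A]
    (f : G → A)
    (hint : ∀ (φ : G → ℂ), Measurable φ → (∃ C, ∀ t, ‖φ t‖ ≤ C) →
      ∀ K : Set G, IsCompact K → IntegrableOn (fun t => φ t • f t) K μ)
    (I : (G → ℂ) → A)
    (hI : ∀ (φ : G → ℂ), Measurable φ → (∃ C, ∀ t, ‖φ t‖ ≤ C) →
      Tendsto (fun K : {K : Set G // IsCompact K} => ∫ t in (K : Set G), φ t • f t ∂μ)
        atTop (nhds (I φ)))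
    (M : ℝ)
    (hM : ∀ (φ : G → ℂ) (C : ℝ), Measurable φ → (∀ t, ‖φ t‖ ≤ C) → ‖I φ‖ ≤ M * C)
    (htail : ∀ ε : ℝ, 0 < ε → ∃ K : Set G, IsCompact K ∧
      ∀ L : Set G, IsCompact L → Disjoint K L →
        ∀ (φ : G → ℂ) (C : ℝ), Measurable φ → (∀ t, ‖φ t‖ ≤ C) →
          ‖∫ t in L, φ t • f t ∂μ‖ ≤ ε * C)
    {ι : Type*} (l : Filter ι) [l.NeBot]
    (φnet : ι → G → ℂ) (φlim : G → ℂ)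
    (hmeas : ∀ i, Measurable (φnet i)) (hmeaslim : Measurable φlim)
    (C : ℝ) (hbdd : ∀ i t, ‖φnet i t‖ ≤ C) (hbddlim : ∀ t, ‖φlim t‖ ≤ C)
    (hunif : ∀ K : Set G, IsCompact K → TendstoUniformlyOn φnet φlim l K) :
    Tendsto (fun i => I (φnet i)) l (nhds (I φlim)) := by
  classical
  -- the index set of the net of compact sets is directed and nonempty
  haveI hdir : (atTop : Filter {K : Set G // IsCompact K}).NeBot :=
    atTop_neBot_iff.mpr ⟨⟨⟨∅, isCompact_empty⟩⟩,
      ⟨fun a b => ⟨⟨a.1 ∪ b.1, a.2.union b.2⟩,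
        Set.subset_union_left, Set.subset_union_right⟩⟩⟩
  have hC0 : (0 : ℝ) ≤ C := le_trans (norm_nonneg _) (hbddlim 1)
  -- replace M by max M 0
  set M' : ℝ := max M 0 with hM'def
  have hM0 : (0 : ℝ) ≤ M' := le_max_right _ _
  have hMle : ∀ (φ : G → ℂ) (D : ℝ), Measurable φ → (∀ t, ‖φ t‖ ≤ D) → ‖I φ‖ ≤ M' * D := by
    intro φ D hφ hb
    have hD0 : (0 : ℝ) ≤ D := le_trans (norm_nonneg _) (hb 1)
    exact (hM φ D hφ hb).trans (mul_le_mul_of_nonneg_right (le_max_left _ _) hD0)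
  -- additivity of I
  have hadd : ∀ (ψ₁ ψ₂ : G → ℂ), Measurable ψ₁ → Measurable ψ₂ →
      (∃ C, ∀ t, ‖ψ₁ t‖ ≤ C) → (∃ C, ∀ t, ‖ψ₂ t‖ ≤ C) →
      I (fun t => ψ₁ t + ψ₂ t) = I ψ₁ + I ψ₂ := by
    intro ψ₁ ψ₂ h1 h2 b1 b2
    obtain ⟨C1, hC1⟩ := b1
    obtain ⟨C2, hC2⟩ := b2
    have hb : ∃ C, ∀ t, ‖ψ₁ t + ψ₂ t‖ ≤ C :=
      ⟨C1 + C2, fun t => (norm_add_le _ _).trans (add_le_add (hC1 t) (hC2 t))⟩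
    have t1 := hI _ (h1.add h2) hb
    have t2 := (hI ψ₁ h1 ⟨C1, hC1⟩).add (hI ψ₂ h2 ⟨C2, hC2⟩)
    refine tendsto_nhds_unique t1 (t2.congr fun K => ?_)
    rw [← integral_add (hint ψ₁ h1 ⟨C1, hC1⟩ K.1 K.2) (hint ψ₂ h2 ⟨C2, hC2⟩ K.1 K.2)]
    exact integral_congr_ae (Eventually.of_forall fun t => (add_smul _ _ _).symm)
  -- key estimate: smallness on a suitable compact set gives smallness of I
  have key : ∀ ε : ℝ, 0 < ε → ∃ Kc : Set G, IsCompact Kc ∧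
      ∀ (ψ : G → ℂ) (D : ℝ), Measurable ψ → (∀ t, ‖ψ t‖ ≤ D) →
        (∀ t ∈ Kc, ‖ψ t‖ ≤ ε) → ‖I ψ‖ ≤ M' * ε + ε * D := by
    intro ε hε
    obtain ⟨K₀, hK₀, hK₀tail⟩ := htail ε hε
    obtain ⟨K₁, hK₁, hK₀K₁⟩ := exists_compact_superset hK₀
    obtain ⟨χ, hχ1, -, hχc, hχ01⟩ :=
      exists_continuous_one_zero_of_isCompact hK₁ isClosed_empty (Set.disjoint_empty _)
    refine ⟨tsupport χ, hχc, ?_⟩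
    intro ψ D hψ hbD hsmall
    have hD0 : (0 : ℝ) ≤ D := le_trans (norm_nonneg _) (hbD 1)
    set ψ₁ : G → ℂ := fun t => ψ t * (χ t : ℂ) with hψ₁def
    set ψ₂ : G → ℂ := fun t => ψ t * (1 - (χ t : ℂ)) with hψ₂def
    have hχm : Measurable fun t => (χ t : ℂ) :=
      (Complex.continuous_ofReal.comp χ.continuous).measurable
    have hm1 : Measurable ψ₁ := hψ.mul hχm
    have hm2 : Measurable ψ₂ := hψ.mul (measurable_const.sub hχm)
    have hb1 : ∀ t, ‖ψ₁ t‖ ≤ ε := by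
      intro t
      by_cases ht : χ t = 0
      · simp [hψ₁def, ht]
        exact le_of_lt hε
      · have htK : t ∈ tsupport χ := subset_tsupport χ ht
        calc ‖ψ₁ t‖ = ‖ψ t‖ * ‖(χ t : ℂ)‖ := norm_mul _ _
          _ ≤ ε * 1 := by
              refine mul_le_mul (hsmall t htK) ?_ (norm_nonneg _) (le_of_lt hε)
              rw [Complex.norm_real, Real.norm_eq_abs, abs_le]
              exact ⟨le_trans (by norm_num) (hχ01 t).1, (hχ01 t).2⟩
          _ = ε := mul_one ε
    have hb2 : ∀ t, ‖ψ₂ t‖ ≤ D := by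
      intro t
      calc ‖ψ₂ t‖ = ‖ψ t‖ * ‖(1 - (χ t : ℂ))‖ := norm_mul _ _
        _ ≤ D * 1 := by
            refine mul_le_mul (hbD t) ?_ (norm_nonneg _) hD0
            have : (1 - (χ t : ℂ)) = ((1 - χ t : ℝ) : ℂ) := by push_cast; ring
            rw [this, Complex.norm_real, Real.norm_eq_abs, abs_le]
            constructor <;> nlinarith [(hχ01 t).1, (hχ01 t).2]
        _ = D := mul_one D
    -- split I ψ = I ψ₁ + I ψ₂
    have hsplit : I ψ = I ψ₁ + I ψ₂ := by
      have : ψ = fun t => ψ₁ t + ψ₂ t := by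
        funext t; simp [hψ₁def, hψ₂def]; ring
      rw [this]
      exact hadd ψ₁ ψ₂ hm1 hm2 ⟨ε, hb1⟩ ⟨D, hb2⟩
    -- estimate I ψ₂ using the tail condition
    have h2 : ‖I ψ₂‖ ≤ ε * D := by
      refine le_of_tendsto ((hI ψ₂ hm2 ⟨D, hb2⟩).norm) (Eventually.of_forall ?_)
      rintro ⟨L, hL⟩
      have hU : MeasurableSet (interior K₁) := isOpen_interior.measurableSet
      have hintL : IntegrableOn (fun t => ψ₂ t • f t) L μ := hint ψ₂ hm2 ⟨D, hb2⟩ L hL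
      have hzero : ∀ t ∈ interior K₁, ψ₂ t • f t = 0 := by
        intro t ht
        have : χ t = 1 := hχ1 (interior_subset ht)
        simp [hψ₂def, this]
      have hdecomp : (∫ t in L, ψ₂ t • f t ∂μ)
          = ∫ t in (interior K₁)ᶜ ∩ L, ψ₂ t • f t ∂μ := by
        have := integral_add_compl hU (μ := μ.restrict L) hintL
        rw [Measure.restrict_restrict hU, Measure.restrict_restrict hU.compl] at this
        rw [← this, setIntegral_eq_zero_of_forall_eq_zero
          (fun t ht => hzero t ht.1), zero_add]
      rw [hdecomp]
      refine hK₀tail _ (hL.inter_left isOpen_interior.isClosed_compl) ?_ ψ₂ D hm2 hb2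
      rw [Set.disjoint_left]
      intro a haK₀ haS
      exact haS.1 (hK₀K₁ haK₀)
    calc ‖I ψ‖ ≤ ‖I ψ₁‖ + ‖I ψ₂‖ := by rw [hsplit]; exact norm_add_le _ _
      _ ≤ M' * ε + ε * D := add_le_add (hMle ψ₁ ε hm1 hb1) h2
  -- main argument
  rw [Metric.tendsto_nhds]
  intro ε' hε'
  set ε0 : ℝ := ε' / (M' + 2 * C + 1) with hε0def
  have hden : (0 : ℝ) < M' + 2 * C + 1 := by linarith
  have hε0 : 0 < ε0 := div_pos hε' hden
  obtain ⟨Kc, hKc, hkey⟩ := key ε0 hε0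
  have hUnif := (Metric.tendstoUniformlyOn_iff.mp (hunif Kc hKc)) ε0 hε0
  filter_upwards [hUnif] with i hi
  set ψ : G → ℂ := fun t => φnet i t - φlim t with hψdef
  have hmψ : Measurable ψ := (hmeas i).sub hmeaslim
  have hbψ : ∀ t, ‖ψ t‖ ≤ 2 * C := by
    intro t
    calc ‖ψ t‖ ≤ ‖φnet i t‖ + ‖φlim t‖ := norm_sub_le _ _
      _ ≤ 2 * C := by linarith [hbdd i t, hbddlim t]
  have hsm : ∀ t ∈ Kc, ‖ψ t‖ ≤ ε0 := by
    intro t ht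
    have := hi t ht
    rw [dist_comm, Complex.dist_eq] at this
    exact le_of_lt this
  have hIψ : I (φnet i) - I φlim = I ψ := by
    have h1 : I (fun t => ψ t + φlim t) = I ψ + I φlim :=
      hadd ψ φlim hmψ hmeaslim ⟨2 * C, hbψ⟩ ⟨C, hbddlim⟩
    have h2 : (fun t => ψ t + φlim t) = φnet i := by
      funext t; simp [hψdef]
    rw [h2] at h1
    rw [h1]; abel
  rw [dist_eq_norm, hIψ]
  calc ‖I ψ‖ ≤ M' * ε0 + ε0 * (2 * C) := hkey ψ (2 * C) hmψ hbψ hsm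
    _ = ε' * ((M' + 2 * C) / (M' + 2 * C + 1)) := by rw [hε0def]; ring
    _ < ε' * 1 := by
        refine mul_lt_mul_of_pos_left ?_ hε'
        rw [div_lt_one hden]; linarith
    _ = ε' := mul_one ε'
end

section
/- Let P be the rank-one projection onto the span of a unit vector φ ∈ L²(S¹). If the bilateral-shift orbit sums converge, i.e., if the strictly-unconditional sum T = Σ_{n∈ℤ} UⁿPU⁻ⁿ exists as a bounded operator on L²(S¹) (U being multiplication by z), then the matrix of T in the basis {eₙ} satisfies ⟨T e_j, e_i⟩ = (φ · conj(φ))^(i−j), the (i−j)-th Fourier coefficient of |φ|², and consequently φ ∈ L∞(S¹). -/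
open MeasureTheory AddCircle ContinuousLinearMap Filter
open scoped ENNReal

/-- Let `P` be the rank-one projection onto the span of a unit vector `φ ∈ L²(S¹)` and let
`W n` be multiplication by `zⁿ` (so `W n = Uⁿ`, `U` the bilateral shift).  If the net of
partial sums `∑_{n ∈ J} Uⁿ P U⁻ⁿ` converges in the weak operator topology to a bounded
operator `S`, then `⟨S e_j, e_i⟩` is the `(i−j)`-th Fourier coefficient of `|φ|²`, and
consequently `φ ∈ L∞(S¹)`. -/
theorem wot_sum_shift_conj_rank_one
    {p : ℝ} [hp : Fact (0 < p)]
    (φ : Lp ℂ 2 (@haarAddCircle p hp)) (hφ2 : ‖φ‖ = 1)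
    (P : Lp ℂ 2 (@haarAddCircle p hp) →L[ℂ] Lp ℂ 2 (@haarAddCircle p hp))
    (hP : ∀ ξ, P ξ = (inner ℂ φ ξ : ℂ) • φ)
    (W : ℤ → (Lp ℂ 2 (@haarAddCircle p hp) →L[ℂ] Lp ℂ 2 (@haarAddCircle p hp)))
    (hW : ∀ (n : ℤ) (ξ : Lp ℂ 2 (@haarAddCircle p hp)),
      (W n ξ : AddCircle p → ℂ) =ᵐ[haarAddCircle] fun x => fourier n x * ξ x)
    (S : Lp ℂ 2 (@haarAddCircle p hp) →L[ℂ] Lp ℂ 2 (@haarAddCircle p hp))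
    (hS : ∀ ξ η : Lp ℂ 2 (@haarAddCircle p hp),
      Tendsto (fun J : Finset ℤ => ∑ n ∈ J, (inner ℂ η ((W n ∘L P ∘L W (-n)) ξ) : ℂ))
        atTop (nhds (inner ℂ η (S ξ)))) :
    (∀ i j : ℤ, (inner ℂ (fourierLp 2 i) (S (fourierLp 2 j)) : ℂ) =
        fourierCoeff (fun x : AddCircle p => (starRingEnd ℂ) (φ x) * φ x) (i - j)) ∧
      MemLp (φ : AddCircle p → ℂ) ∞ haarAddCircle := by
  have innerWB : ∀ (n : ℤ) (ξ η : Lp ℂ 2 (@haarAddCircle p hp)),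
      (inner ℂ η (W n ξ) : ℂ) = inner ℂ (W (-n) η) ξ := by
    intro n ξ η
    rw [MeasureTheory.L2.inner_def, MeasureTheory.L2.inner_def]
    refine integral_congr_ae ?_
    filter_upwards [hW n ξ, hW (-n) η] with x h1 h2
    simp only [RCLike.inner_apply, h1, h2, map_mul, fourier_neg, RingHomCompTriple.comp_apply,
      RingHom.id_apply, Complex.conj_conj]
    ring
  have WfourierLp : ∀ n k : ℤ, W n (fourierLp 2 k) = fourierLp 2 (n + k) := by
    intro n k
    apply Lp.ext
    filter_upwards [hW n (fourierLp 2 k), coeFn_fourierLp (T := p) 2 k,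
      coeFn_fourierLp (T := p) 2 (n + k)] with x h1 h2 h3
    rw [h1, h2, h3, fourier_add]
  have coeff : ∀ (k : ℤ) (ξ : Lp ℂ 2 (@haarAddCircle p hp)),
      (inner ℂ (fourierLp 2 k) ξ : ℂ) = fourierCoeff (ξ : AddCircle p → ℂ) k := by
    intro k ξ
    rw [← fourierBasis_repr, fourierBasis.repr_apply_apply, coe_fourierBasis]
  have termEq : ∀ (n : ℤ) (ξ η : Lp ℂ 2 (@haarAddCircle p hp)),
      (inner ℂ η ((W n ∘L P ∘L W (-n)) ξ) : ℂ)
        = (inner ℂ φ (W (-n) ξ) : ℂ) * (inner ℂ η (W n φ) : ℂ) := by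
    intro n ξ η
    rw [ContinuousLinearMap.comp_apply, ContinuousLinearMap.comp_apply, hP,
      (W n).map_smul, inner_smul_right]
  constructor
  · intro i j
    have hterm : ∀ n : ℤ, (inner ℂ (fourierLp 2 i) ((W n ∘L P ∘L W (-n)) (fourierLp 2 j)) : ℂ)
        = (starRingEnd ℂ) (fourierCoeff (φ : AddCircle p → ℂ) (j - n))
            * fourierCoeff (φ : AddCircle p → ℂ) (i - n) := by
      intro n
      rw [termEq, innerWB n φ (fourierLp 2 i), WfourierLp, WfourierLp, coeff,
        ← inner_conj_symm, coeff]
      norm_num [sub_eq_neg_add]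
    have hpar : HasSum
        (fun n : ℤ => (starRingEnd ℂ) (fourierCoeff (φ : AddCircle p → ℂ) (j - n))
            * fourierCoeff (φ : AddCircle p → ℂ) (i - n))
        (inner ℂ (W (i - j) φ) φ : ℂ) := by
      have h0 := (fourierBasis (T := p)).hasSum_inner_mul_inner (W (i - j) φ) φ
      have heq : (fun m : ℤ => (inner ℂ ((W (i - j)) φ) (fourierBasis (T := p) m) : ℂ)
            * (inner ℂ (fourierBasis (T := p) m) φ : ℂ))
          = fun m : ℤ => (starRingEnd ℂ) (fourierCoeff (φ : AddCircle p → ℂ) (m - (i - j)))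
            * fourierCoeff (φ : AddCircle p → ℂ) m := by
        funext m
        rw [show (fourierBasis (T := p) m : Lp ℂ 2 (@haarAddCircle p hp)) = fourierLp 2 m from
          congrFun coe_fourierBasis m]
        rw [← inner_conj_symm, innerWB, WfourierLp, coeff, coeff,
          show -(i - j) + m = m - (i - j) by ring]
      rw [heq] at h0
      have h4 := (Equiv.subLeft i).hasSum_iff.mpr h0
      refine h4.congr_fun ?_
      intro n
      simp only [Function.comp, Equiv.subLeft_apply]
      congr 2 <;> ring
    have hlim := hS (fourierLp 2 j) (fourierLp 2 i)
    have hlim' : Tendsto (fun J : Finset ℤ => ∑ n ∈ J,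
        ((starRingEnd ℂ) (fourierCoeff (φ : AddCircle p → ℂ) (j - n))
          * fourierCoeff (φ : AddCircle p → ℂ) (i - n)))
        atTop (nhds (inner ℂ (fourierLp 2 i) (S (fourierLp 2 j)))) := by
      refine hlim.congr fun J => Finset.sum_congr rfl fun n _ => hterm n
    have := tendsto_nhds_unique hlim' hpar
    rw [this]
    rw [MeasureTheory.L2.inner_def, fourierCoeff]
    refine integral_congr_ae ?_
    filter_upwards [hW (i - j) φ] with x h1
    simp only [RCLike.inner_apply, h1, map_mul, smul_eq_mul, fourier_neg]
    ring
  · have hC : (0:ℝ) ≤ ‖S‖ := norm_nonneg S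
    set M : ℝ := Real.sqrt ‖S‖ + 1 with hM
    have hM0 : 0 < M := by positivity
    have hM2 : ‖S‖ < M ^ 2 := by
      have h1 : Real.sqrt ‖S‖ ^ 2 = ‖S‖ := Real.sq_sqrt hC
      nlinarith [Real.sqrt_nonneg ‖S‖]
    set E : Set (AddCircle p) := {x | M < ‖(φ : AddCircle p → ℂ) x‖} with hE_def
    have hE : MeasurableSet E :=
      measurableSet_lt measurable_const (Lp.stronglyMeasurable φ).measurable.norm
    have hμE_top : (@haarAddCircle p hp) E ≠ ∞ := measure_ne_top _ E
    set ψ : Lp ℂ 2 (@haarAddCircle p hp) := indicatorConstLp 2 hE hμE_top (1:ℂ) with hψdef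
    set g : AddCircle p → ℂ :=
      E.indicator (fun x => (starRingEnd ℂ) ((φ : AddCircle p → ℂ) x)) with hg_def
    have hgmem : MemLp g 2 (@haarAddCircle p hp) := by
      refine MemLp.indicator hE (MemLp.of_le (Lp.memLp φ) ?_ ?_)
      · exact continuous_star.comp_aestronglyMeasurable (Lp.aestronglyMeasurable φ)
      · filter_upwards with x; simp
    set G : Lp ℂ 2 (@haarAddCircle p hp) := hgmem.toLp g with hGdef
    set c : ℤ → ℂ := fun n => fourierCoeff g n with hc_def
    -- identify the inner ℂ products with Fourier coefficients of g
    have hcoeffg : ∀ n : ℤ, (inner ℂ φ (W (-n) ψ) : ℂ) = c n := by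
      intro n
      rw [MeasureTheory.L2.inner_def, hc_def]
      show _ = fourierCoeff g n
      rw [fourierCoeff]
      refine integral_congr_ae ?_
      filter_upwards [hW (-n) ψ, indicatorConstLp_coeFn (p := 2) (hs := hE) (hμs := hμE_top)
        (c := (1:ℂ))] with x h1 h2
      simp only [RCLike.inner_apply, h1, smul_eq_mul]; rw [hψdef, h2]
      by_cases hx : x ∈ E
      · simp only [hg_def, Set.indicator_of_mem hx]; ring
      · simp [hg_def, Set.indicator_of_notMem hx]
    -- the diagonal sums
    have hsum : HasSum (fun n : ℤ => ((‖c n‖ ^ 2 : ℝ) : ℂ)) (inner ℂ ψ (S ψ) : ℂ) := by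
      have hterm : ∀ n : ℤ, (inner ℂ ψ ((W n ∘L P ∘L W (-n)) ψ) : ℂ) = ((‖c n‖ ^ 2 : ℝ) : ℂ) := by
        intro n
        rw [termEq, innerWB n φ ψ, ← inner_conj_symm ((W (-n)) ψ) φ, hcoeffg]
        simp [Complex.mul_conj, Complex.normSq_eq_norm_sq]
      exact Filter.Tendsto.congr (fun J => Finset.sum_congr rfl fun n _ => hterm n) (hS ψ ψ)
    have hsumR : HasSum (fun n : ℤ => ‖c n‖ ^ 2) (Complex.re (inner ℂ ψ (S ψ) : ℂ)) := by
      have h := hsum.mapL Complex.reCLM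
      have h2 : (fun n : ℤ => Complex.reCLM ((‖c n‖ ^ 2 : ℝ) : ℂ)) = fun n : ℤ => ‖c n‖ ^ 2 := by
        funext n; rw [Complex.reCLM_apply, Complex.ofReal_re]
      rwa [h2] at h
    have hψnorm : ‖ψ‖ ^ 2 = ((@haarAddCircle p hp) E).toReal := by
      rw [hψdef, norm_indicatorConstLp (by norm_num) (by norm_num)]
      rw [norm_one, one_mul, measureReal_def, ← Real.rpow_natCast _ 2, ← Real.rpow_mul ENNReal.toReal_nonneg]
      norm_num
    have hupper : Complex.re (inner ℂ ψ (S ψ) : ℂ) ≤ ‖S‖ * ((@haarAddCircle p hp) E).toReal := by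
      calc Complex.re (inner ℂ ψ (S ψ) : ℂ) ≤ ‖(inner ℂ ψ (S ψ) : ℂ)‖ := Complex.re_le_norm _
        _ ≤ ‖ψ‖ * ‖S ψ‖ := norm_inner_le_norm _ _
        _ ≤ ‖ψ‖ * (‖S‖ * ‖ψ‖) := by
            gcongr; exact S.le_opNorm ψ
        _ = ‖S‖ * ‖ψ‖ ^ 2 := by ring
        _ = ‖S‖ * ((@haarAddCircle p hp) E).toReal := by rw [hψnorm]
    -- Parseval
    have hGc : ∀ n, fourierCoeff (G : AddCircle p → ℂ) n = c n := by
      intro n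
      rw [hc_def]
      show _ = fourierCoeff g n
      rw [fourierCoeff, fourierCoeff]
      refine integral_congr_ae ?_
      filter_upwards [hgmem.coeFn_toLp] with x hx
      rw [hx]
    have hpars : ∑' n : ℤ, ‖c n‖ ^ 2 = ∫ t, ‖(G : AddCircle p → ℂ) t‖ ^ 2 ∂haarAddCircle := by
      rw [← tsum_sq_fourierCoeff G]
      exact tsum_congr fun n => by rw [hGc]
    have hGg : ∫ t, ‖(G : AddCircle p → ℂ) t‖ ^ 2 ∂haarAddCircle
        = ∫ t in E, ‖(φ : AddCircle p → ℂ) t‖ ^ 2 ∂haarAddCircle := by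
      rw [← integral_indicator hE]
      refine integral_congr_ae ?_
      filter_upwards [hgmem.coeFn_toLp] with x hx
      rw [hx]
      by_cases hxE : x ∈ E
      · simp [hg_def, Set.indicator_of_mem hxE]
      · simp [hg_def, Set.indicator_of_notMem hxE]
    have hint : Integrable (fun t => ‖(φ : AddCircle p → ℂ) t‖ ^ 2) haarAddCircle := by
      have h := (Lp.memLp φ).integrable_norm_rpow (by norm_num) (by norm_num)
      simpa [Real.rpow_natCast] using h
    have hlower : M ^ 2 * ((@haarAddCircle p hp) E).toReal
        ≤ ∫ t in E, ‖(φ : AddCircle p → ℂ) t‖ ^ 2 ∂haarAddCircle := by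
      have h1 : ∫ _ in E, M ^ 2 ∂(@haarAddCircle p hp) = M ^ 2 * ((@haarAddCircle p hp) E).toReal := by
        rw [setIntegral_const, smul_eq_mul, mul_comm, measureReal_def]
      rw [← h1]
      refine setIntegral_mono_on ((integrableOn_const_iff (C := M ^ 2)).mpr (Or.inr (measure_lt_top _ E)))
        hint.integrableOn hE ?_
      intro x hx
      have hx' : M < ‖(φ : AddCircle p → ℂ) x‖ := hx
      nlinarith [hM0.le]
    have hcomb : M ^ 2 * ((@haarAddCircle p hp) E).toReal
        ≤ ‖S‖ * ((@haarAddCircle p hp) E).toReal := by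
      calc M ^ 2 * ((@haarAddCircle p hp) E).toReal
          ≤ ∫ t in E, ‖(φ : AddCircle p → ℂ) t‖ ^ 2 ∂haarAddCircle := hlower
        _ = ∑' n : ℤ, ‖c n‖ ^ 2 := by rw [hpars, hGg]
        _ = Complex.re (inner ℂ ψ (S ψ) : ℂ) := hsumR.tsum_eq
        _ ≤ ‖S‖ * ((@haarAddCircle p hp) E).toReal := hupper
    have hμE0 : ((@haarAddCircle p hp) E).toReal = 0 := by
      nlinarith [ENNReal.toReal_nonneg (a := (@haarAddCircle p hp) E)]
    have hE0 : (@haarAddCircle p hp) E = 0 :=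
      ((ENNReal.toReal_eq_zero_iff _).mp hμE0).resolve_right hμE_top
    refine memLp_top_of_bound (Lp.aestronglyMeasurable φ) M ?_
    rw [ae_iff]
    have heq : {x | ¬ ‖(φ : AddCircle p → ℂ) x‖ ≤ M} = E := by
      ext x; simp [hE_def, not_le]
    rw [heq]
    exact hE0
end
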